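/- The product over all primes p of (1 + 1/(p² − p)) equals ζ(2)ζ(3)/ζ(6) = 315·ζ(3)/(2π⁴), where ζ is the Riemann zeta function. -/

import Mathlib

open Finset in
theorem bernoulli'_five' : bernoulli' 5 = 0 := by
  have h : Nat.choose 5 2 = 10 := by decide
  have h' : Nat.choose 5 3 = 10 := by decide
  rw [bernoulli'_def]
  norm_num [sum_range_succ, sum_range_zero, h, h']

open Finset in
theorem bernoulli'_six' : bernoulli' 6 = 1 / 42 := by
  have h2 : Nat.choose 6 2 = 15 := by decide
  have h3 : Nat.choose 6 3 = 20 := by decide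
  have h4 : Nat.choose 6 4 = 15 := by decide
  rw [bernoulli'_def]
  norm_num [sum_range_succ, sum_range_zero, h2, h3, h4, bernoulli'_five']

/-- The Riemann zeta function at a natural number `k`, as the real series `∑ m ≥ 1, m⁻ᵏ`. -/
noncomputable def zetaNat (k : ℕ) : ℝ :=
  ∑' m : ℕ, 1 / (m + 1 : ℝ) ^ k

theorem zetaNat_eq_tsum {k : ℕ} (hk : 2 ≤ k) :
    zetaNat k = ∑' n : ℕ, 1 / (n : ℝ) ^ k := by
  have hk0 : k ≠ 0 := by omega
  have hs : Summable (fun n : ℕ ↦ 1 / (n : ℝ) ^ k) :=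
    Real.summable_one_div_nat_pow.mpr (by omega)
  rw [hs.tsum_eq_zero_add]
  simp only [Nat.cast_zero, zero_pow hk0, div_zero, zero_add, zetaNat]
  push_cast
  rfl

/-- The completely multiplicative function `n ↦ (n : ℝ)⁻ᵏ` (for `k ≠ 0`). -/
noncomputable def powInvHom (k : ℕ) (hk : k ≠ 0) : ℕ →*₀ ℝ where
  toFun n := ((n : ℝ) ^ k)⁻¹
  map_zero' := by simp [zero_pow hk]
  map_one' := by simp
  map_mul' m n := by push_cast; rw [mul_pow, mul_inv]

theorem summable_powInvHom {k : ℕ} (hk : 2 ≤ k) (hk0 : k ≠ 0) :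
    Summable (fun n ↦ ‖powInvHom k hk0 n‖) := by
  have : ∀ n : ℕ, ‖powInvHom k hk0 n‖ = ((n : ℝ) ^ k)⁻¹ := fun n ↦ by
    simp only [powInvHom, MonoidWithZeroHom.coe_mk, ZeroHom.coe_mk, Real.norm_eq_abs]
    exact abs_of_nonneg (inv_nonneg.mpr (pow_nonneg (Nat.cast_nonneg _) _))
  rw [funext this]
  exact Real.summable_nat_pow_inv.mpr (by omega)

theorem zetaNat_hasProd {k : ℕ} (hk : 2 ≤ k) :
    HasProd (fun p : Nat.Primes ↦ (1 - ((p : ℝ) ^ k)⁻¹)⁻¹) (zetaNat k) := by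
  have hk0 : k ≠ 0 := by omega
  have h := EulerProduct.eulerProduct_completely_multiplicative_hasProd
    (summable_powInvHom hk hk0)
  have : (∑' n : ℕ, powInvHom k hk0 n) = zetaNat k := by
    rw [zetaNat_eq_tsum hk]
    exact tsum_congr fun n ↦ by simp [powInvHom, one_div]
  rwa [this] at h

theorem zetaNat_two : zetaNat 2 = Real.pi ^ 2 / 6 := by
  rw [zetaNat_eq_tsum (le_refl 2), hasSum_zeta_two.tsum_eq]

theorem zetaNat_six : zetaNat 6 = Real.pi ^ 6 / 945 := by
  rw [zetaNat_eq_tsum (by norm_num : (2:ℕ) ≤ 6)]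
  have h := (hasSum_zeta_nat (k := 3) (by norm_num)).tsum_eq
  norm_num at h ⊢
  rw [h, bernoulli_eq_bernoulli'_of_ne_one (by norm_num), bernoulli'_six']
  norm_num [Nat.factorial]
  ring

theorem zetaNat_six_ne : zetaNat 6 ≠ 0 := by
  rw [zetaNat_six]
  positivity

/-- `ϑ = ∏_p (1 + 1/(p² - p)) = ζ(2)ζ(3)/ζ(6) = 315ζ(3)/(2π⁴)`. -/
theorem theta_eq :
    (∏' p : Nat.Primes, (1 + 1 / ((p : ℝ) ^ 2 - p))) = zetaNat 2 * zetaNat 3 / zetaNat 6 ∧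
      zetaNat 2 * zetaNat 3 / zetaNat 6 = 315 * zetaNat 3 / (2 * Real.pi ^ 4) := by
  constructor
  · have h2 := zetaNat_hasProd (k := 2) le_rfl
    have h3 := zetaNat_hasProd (k := 3) (by norm_num)
    have h6 := zetaNat_hasProd (k := 6) (by norm_num)
    have hinv : Filter.Tendsto
        (fun s : Finset Nat.Primes ↦ (∏ p ∈ s, (1 - ((p : ℝ) ^ 6)⁻¹)⁻¹)⁻¹)
        Filter.atTop (nhds (zetaNat 6)⁻¹) := Filter.Tendsto.inv₀ h6 zetaNat_six_ne
    have key : HasProd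
        (fun p : Nat.Primes ↦ (1 - ((p : ℝ) ^ 2)⁻¹)⁻¹ * (1 - ((p : ℝ) ^ 3)⁻¹)⁻¹ *
          ((1 - ((p : ℝ) ^ 6)⁻¹)⁻¹)⁻¹)
        (zetaNat 2 * zetaNat 3 * (zetaNat 6)⁻¹) := by
      have hAB : Filter.Tendsto
          (fun s : Finset Nat.Primes ↦
            ∏ p ∈ s, ((1 - ((p : ℝ) ^ 2)⁻¹)⁻¹ * (1 - ((p : ℝ) ^ 3)⁻¹)⁻¹))
          Filter.atTop (nhds (zetaNat 2 * zetaNat 3)) := h2.mul h3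
      have hT := hAB.mul hinv
      unfold HasProd
      simpa [Finset.prod_mul_distrib, Finset.prod_inv_distrib] using hT
    have heq : (fun p : Nat.Primes ↦ (1 + 1 / ((p : ℝ) ^ 2 - p))) =
        fun p : Nat.Primes ↦ (1 - ((p : ℝ) ^ 2)⁻¹)⁻¹ * (1 - ((p : ℝ) ^ 3)⁻¹)⁻¹ *
          ((1 - ((p : ℝ) ^ 6)⁻¹)⁻¹)⁻¹ := by
      funext p
      have hx : (2 : ℝ) ≤ (p : ℝ) := by exact_mod_cast p.2.two_le
      set x : ℝ := (p : ℝ) with hxdef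
      have hx0 : x ≠ 0 := by nlinarith
      have hx1 : (1 : ℝ) < x := by linarith
      have hd1 : x ^ 2 - x ≠ 0 := by nlinarith
      have hd2 : x ^ 2 - 1 ≠ 0 := by nlinarith
      have hd3 : x ^ 3 - 1 ≠ 0 := by
        have h8 : (2 : ℝ) ^ 3 ≤ x ^ 3 := pow_le_pow_left₀ (by norm_num) hx 3
        norm_num at h8; intro h; nlinarith
      have hx2 : (x : ℝ) ^ 2 ≠ 0 := pow_ne_zero _ hx0
      have hx3 : (x : ℝ) ^ 3 ≠ 0 := pow_ne_zero _ hx0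
      have hx6 : (x : ℝ) ^ 6 ≠ 0 := pow_ne_zero _ hx0
      have e2 : 1 - (x ^ 2)⁻¹ = (x ^ 2 - 1) / x ^ 2 := by field_simp
      have e3 : 1 - (x ^ 3)⁻¹ = (x ^ 3 - 1) / x ^ 3 := by field_simp
      have e6 : 1 - (x ^ 6)⁻¹ = (x ^ 6 - 1) / x ^ 6 := by field_simp
      rw [inv_inv, e2, e3, e6, inv_div, inv_div]
      have hxm : x - 1 ≠ 0 := sub_ne_zero.mpr (ne_of_gt hx1)
      field_simp
      ring
    rw [heq, key.tprod_eq, div_eq_mul_inv]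
  · rw [zetaNat_two, zetaNat_six]
    have hπ : Real.pi ≠ 0 := Real.pi_ne_zero
    field_simp
    ring
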